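/- arXiv:1410.3313 — 4 statements merged into one kernel-verified Lean document; each statement's English description precedes it below -/
import Mathlib

section
/- Let G be a nontrivial abelian group of finite exponent, written as G = ⨁_{p ∈ π(G)} ⨁_{i=1}^{m_p} (Z/p^i)^(α_{p,i}) with α_{p,m_p} > 0 for each p ∈ π(G). If for every positive integer m either mG = 0 or mG is infinite, then every leading Ulm-Kaplanski invariant α_{p,m_p} is infinite. -/
/-- Let `G` be a nontrivial abelian group of finite exponent, written as
`G = ⨁_{p ∈ S} ⨁_{i=1}^{m p} (ℤ/pⁱ)^(α_{p,i})` (the index types `ι p i` realize the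
Ulm-Kaplanski invariants `α_{p,i}`, with the leading ones `ι p (m p)` nonempty).
If for every positive integer `k` either `kG = 0` or `kG` is infinite, then every
leading Ulm-Kaplanski invariant is infinite. -/
theorem leading_ulm_kaplanski_infinite (G : Type*) [AddCommGroup G]
    (S : Finset ℕ) (hS : ∀ p ∈ S, p.Prime) (hSne : S.Nonempty)
    (m : ℕ → ℕ) (hm : ∀ p ∈ S, 1 ≤ m p)
    (ι : ℕ → ℕ → Type)
    (hlead : ∀ p ∈ S, Nonempty (ι p (m p)))
    (e : G ≃+ Π₀ x : (Σ p : {p : ℕ // p ∈ S}, Σ i : Fin (m p.1), ι p.1 (i.1 + 1)),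
      ZMod (x.1.1 ^ (x.2.1.1 + 1)))
    (hcon : ∀ k : ℕ, 0 < k →
      (∀ g : G, k • g = 0) ∨ (Set.range fun g : G => k • g).Infinite) :
    ∀ p ∈ S, Infinite (ι p (m p)) := by
  intro p hp
  classical
  have hppr := hS p hp
  have hmp : 1 ≤ m p := hm p hp
  set P : ℕ := ∏ q ∈ S.erase p, q ^ m q with hP
  set k : ℕ := p ^ (m p - 1) * P with hk
  have hPpos : 0 < P := Finset.prod_pos fun q hq =>
    pow_pos (hS q (Finset.mem_of_mem_erase hq)).pos _
  have hkpos : 0 < k := Nat.mul_pos (pow_pos hppr.pos _) hPpos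
  -- p does not divide P
  have hpP : ¬ p ∣ P := by
    intro hdvd
    obtain ⟨q, hq, hpq⟩ := (hppr.prime.dvd_finset_prod_iff _).1 hdvd
    have hqpr := hS q (Finset.mem_of_mem_erase hq)
    have := (Nat.prime_dvd_prime_iff_eq hppr hqpr).1 (hppr.dvd_of_dvd_pow hpq)
    exact (Finset.ne_of_mem_erase hq) this.symm
  -- p ^ (m p) does not divide k
  have hnotdvd : ¬ p ^ (m p) ∣ k := by
    intro hdvd
    have h1 : p ^ (m p - 1) * p ∣ p ^ (m p - 1) * P := by
      rw [← pow_succ]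
      rwa [Nat.sub_add_cancel hmp]
    have h2 : p ∣ P := (mul_dvd_mul_iff_left (a := p ^ (m p - 1))
      (pow_ne_zero _ hppr.pos.ne')).1 h1
    exact hpP h2
  -- evaluation commutes with nsmul
  have eval_smul : ∀ (f : Π₀ x : (Σ p : {p : ℕ // p ∈ S}, Σ i : Fin (m p.1),
      ι p.1 (i.1 + 1)), ZMod (x.1.1 ^ (x.2.1.1 + 1))) x, (k • f) x = k • f x := by
    intro f x
    exact map_nsmul (DFinsupp.evalAddMonoidHom x) k f
  -- The key divisibility: for coordinates not at the leading (p, m p) position,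
  -- the coordinate power divides k.
  have hdvd_coord : ∀ (x : Σ p : {p : ℕ // p ∈ S}, Σ i : Fin (m p.1), ι p.1 (i.1 + 1)),
      ¬ (x.1.1 = p ∧ x.2.1.1 = m p - 1) → (x.1.1 ^ (x.2.1.1 + 1) : ℕ) ∣ k := by
    rintro ⟨⟨q, hq⟩, ⟨i, hi⟩, j⟩ hx
    simp only at hx ⊢
    have hiq : i < m q := hi
    by_cases hqp : q = p
    · subst hqp
      have hi' : i + 1 ≤ m q - 1 := by
        rcases Nat.lt_or_ge (i + 1) (m q) with h | h
        · omega
        · exfalso; exact hx ⟨rfl, by omega⟩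
      exact dvd_mul_of_dvd_left (pow_dvd_pow q hi') _
    · have hqer : q ∈ S.erase p := Finset.mem_erase.2 ⟨hqp, hq⟩
      have h1 : q ^ (i + 1) ∣ q ^ m q := pow_dvd_pow q hi
      have h2 : q ^ m q ∣ P := Finset.dvd_prod_of_mem _ hqer
      exact dvd_mul_of_dvd_right (h1.trans h2) _
  -- hence for any g, e (k • g) vanishes off the leading coordinates
  have hvanish : ∀ (g : G) (x : Σ p : {p : ℕ // p ∈ S}, Σ i : Fin (m p.1), ι p.1 (i.1 + 1)),
      ¬ (x.1.1 = p ∧ x.2.1.1 = m p - 1) → e (k • g) x = 0 := by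
    intro g x hx
    rw [map_nsmul, eval_smul, nsmul_eq_mul,
      (ZMod.natCast_eq_zero_iff k _).2 (hdvd_coord x hx), zero_mul]
  have hlt : m p - 1 < m p := by omega
  have hmp1 : m p - 1 + 1 = m p := Nat.sub_add_cancel hmp
  -- k • g₀ ≠ 0 for a suitable g₀
  obtain ⟨j₀'⟩ := hlead p hp
  have j₀ : ι p (m p - 1 + 1) := hmp1.symm ▸ j₀'
  set x₀ : Σ p : {p : ℕ // p ∈ S}, Σ i : Fin (m p.1), ι p.1 (i.1 + 1) :=
    ⟨⟨p, hp⟩, ⟨m p - 1, hlt⟩, j₀⟩ with hx₀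
  have hne : k • (e.symm (DFinsupp.single x₀ 1)) ≠ 0 := by
    intro h0
    have : e (k • e.symm (DFinsupp.single x₀ 1)) x₀ = 0 := by rw [h0, map_zero]; rfl
    rw [map_nsmul, e.apply_symm_apply, eval_smul, DFinsupp.single_eq_same,
      nsmul_eq_mul, mul_one, ZMod.natCast_eq_zero_iff] at this
    rw [hx₀] at this
    simp only [hmp1] at this
    exact hnotdvd this
  rcases hcon k hkpos with hzero | hinf
  · exact absurd (hzero _) hne
  -- now show the range would be finite if ι p (m p) were finite
  by_contra hfin
  rw [not_infinite_iff_finite] at hfin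
  have hfin' : Finite (ι p (m p - 1 + 1)) := by rwa [hmp1]
  haveI : NeZero (p ^ (m p - 1 + 1)) := ⟨pow_ne_zero _ hppr.pos.ne'⟩
  have hrange : (Set.range fun g : G => k • g).Finite := by
    rw [Set.finite_coe_iff.symm]
    refine Finite.of_injective (fun y => fun j : ι p (m p - 1 + 1) =>
      e y.1 ⟨⟨p, hp⟩, ⟨m p - 1, hlt⟩, j⟩) ?_
    rintro ⟨y₁, g₁, rfl⟩ ⟨y₂, g₂, rfl⟩ h
    simp only at h
    ext1
    apply e.injective
    ext x
    obtain ⟨⟨q, hq⟩, ⟨i, hi⟩, j⟩ := x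
    by_cases hx : q = p ∧ i = m p - 1
    · obtain ⟨h1, h2⟩ := hx
      subst h1; subst h2
      exact congrFun h j
    · have hx' : ¬ ((⟨⟨q, hq⟩, ⟨i, hi⟩, j⟩ :
          Σ p : {p : ℕ // p ∈ S}, Σ i : Fin (m p.1), ι p.1 (i.1 + 1)).1.1 = p ∧
          (⟨⟨q, hq⟩, ⟨i, hi⟩, j⟩ :
          Σ p : {p : ℕ // p ∈ S}, Σ i : Fin (m p.1), ι p.1 (i.1 + 1)).2.1.1 = m p - 1) := hx
      exact (hvanish g₁ _ hx').trans (hvanish g₂ _ hx').symm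
  exact hinf hrange
end

section
/- Let G be a nontrivial abelian group of finite exponent whose leading Ulm-Kaplanski invariants are all infinite. Then for every positive integer m, either mG = {0} or mG is infinite. -/
/-- Let `G` be a nontrivial abelian group of finite exponent, written as
`G = ⨁_{p ∈ S} ⨁_{i=1}^{m p} (ℤ/pⁱ)^(α_{p,i})` (the index types `ι p i` realize the
Ulm-Kaplanski invariants `α_{p,i}`). If all leading Ulm-Kaplanski invariants
`ι p (m p)` are infinite, then for every positive integer `k` either `kG = {0}` or
`kG` is infinite. -/
theorem smul_range_trivial_or_infinite_of_leading_infinite (G : Type*) [AddCommGroup G]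
    (S : Finset ℕ) (hS : ∀ p ∈ S, p.Prime) (hSne : S.Nonempty)
    (m : ℕ → ℕ) (hm : ∀ p ∈ S, 1 ≤ m p)
    (ι : ℕ → ℕ → Type)
    (hlead : ∀ p ∈ S, Infinite (ι p (m p)))
    (e : G ≃+ Π₀ x : (Σ p : {p : ℕ // p ∈ S}, Σ i : Fin (m p.1), ι p.1 (i.1 + 1)),
      ZMod (x.1.1 ^ (x.2.1.1 + 1))) :
    ∀ k : ℕ, 0 < k →
      (∀ g : G, k • g = 0) ∨ (Set.range fun g : G => k • g).Infinite := by
  classical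
  intro k hk
  by_cases h0 : ∀ g : G, k • g = 0
  · exact Or.inl h0
  right
  push_neg at h0
  obtain ⟨g, hg⟩ := h0
  have hkg : k • e g ≠ 0 := by
    rw [← map_nsmul]
    have := e.injective.ne hg
    rwa [map_zero] at this
  obtain ⟨x₀, hx₀⟩ := DFinsupp.ne_iff.mp hkg
  rw [DFinsupp.smul_apply, DFinsupp.zero_apply] at hx₀
  set p := x₀.1.1 with hpdef
  have hpS : p ∈ S := x₀.1.2
  have hpp : p.Prime := hS p hpS
  set i := x₀.2.1.1 with hidef
  have hi : i + 1 ≤ m p := x₀.2.1.2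
  -- k is not divisible by p ^ (i+1)
  have hkx : (k : ZMod (p ^ (i + 1))) ≠ 0 := by
    intro hc
    apply hx₀
    rw [nsmul_eq_mul, hc, zero_mul]
  have hdvd : ¬ p ^ (i + 1) ∣ k := fun hd =>
    hkx ((ZMod.natCast_eq_zero_iff k _).mpr hd)
  set t := m p - (i + 1) with htdef
  have hti : (i + 1) + t = m p := by omega
  have hmp : m p - 1 + 1 = m p := by
    have := hm p hpS; omega
  set i' : Fin (m p) := ⟨m p - 1, by omega⟩ with hi'def
  -- the nonzero value we use in the leading component
  set c : ZMod (p ^ (i'.1 + 1)) := ((p ^ t : ℕ) : ZMod (p ^ (i'.1 + 1))) with hcdef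
  have hkc : k • c ≠ 0 := by
    rw [hcdef, nsmul_eq_mul, ← Nat.cast_mul, Ne, ZMod.natCast_eq_zero_iff]
    intro hd
    apply hdvd
    have hexp : p ^ (i'.1 + 1) = p ^ (i + 1) * p ^ t := by
      rw [← pow_add]
      congr 1
      simp only [hi'def]
      omega
    rw [hexp] at hd
    exact (Nat.mul_dvd_mul_iff_right (Nat.pow_pos (n := t) hpp.pos)).mp hd
  haveI : Infinite (ι p (i'.1 + 1)) := by
    have : i'.1 + 1 = m p := by simp only [hi'def]; omega
    rw [this]
    exact hlead p hpS
  set F : ι p (i'.1 + 1) → G := fun j =>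
    e.symm (DFinsupp.single (⟨⟨p, hpS⟩, ⟨i', j⟩⟩ :
      (Σ q : {q : ℕ // q ∈ S}, Σ i : Fin (m q.1), ι q.1 (i.1 + 1))) c) with hFdef
  apply Set.infinite_of_injective_forall_mem (f := fun j => k • F j)
  · intro j₁ j₂ hj
    simp only [hFdef] at hj
    rw [← map_nsmul, ← map_nsmul, e.symm.injective.eq_iff, ← DFinsupp.single_smul,
      ← DFinsupp.single_smul] at hj
    rcases (DFinsupp.single_eq_single_iff _ _ _ _).mp hj with ⟨hidx, -⟩ | ⟨hz, -⟩
    · have h2 := (Sigma.mk.inj_iff.mp hidx).2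
      have h3 := (Sigma.mk.inj_iff.mp (eq_of_heq h2)).2
      exact eq_of_heq h3
    · exact absurd hz hkc
  · intro j
    exact ⟨F j, rfl⟩
end

section
/- Let G be a topological group. If a family of topological groups (G_i)_{i ∈ I} each has the property that every continuous homomorphism G_i → ℝ/ℤ is trivial, then every continuous homomorphism from the product ∏_{i ∈ I} G_i (with the product topology) to ℝ/ℤ is trivial. -/
open Filter Set Topology

lemma addCircle_no_small {x : AddCircle (1 : ℝ)} (h : ∀ n : ℕ, ‖n • x‖ < 1/4) : x = 0 := by
  obtain ⟨t, rfl⟩ := QuotientAddGroup.mk_surjective x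
  set s : ℝ := t - round t with hs
  have hz : (((round t : ℝ)) : AddCircle (1 : ℝ)) = 0 := by
    rw [AddCircle.coe_eq_zero_iff]
    exact ⟨round t, by simp⟩
  have hcoe : (s : AddCircle (1 : ℝ)) = (t : AddCircle (1 : ℝ)) := by
    rw [hs]
    rw [show ((t - (round t : ℝ) : ℝ) : AddCircle (1 : ℝ))
        = (t : AddCircle (1 : ℝ)) - ((round t : ℝ) : AddCircle (1 : ℝ)) from rfl]
    rw [hz, sub_zero]
  have hshalf : |s| ≤ 1/2 := by
    have := abs_sub_round t
    linarith [this]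
  have hnormx : ‖(t : AddCircle (1 : ℝ))‖ = |s| := by
    rw [← hcoe, AddCircle.norm_coe_eq_abs_iff (1 : ℝ) one_ne_zero]
    simpa using hshalf
  have hs4 : |s| < 1/4 := by
    have h1 := h 1
    rwa [one_smul, hnormx] at h1
  by_contra hx
  have hs0 : s ≠ 0 := by
    intro h0
    apply hx
    rw [← hcoe, h0]
    norm_num
  have hspos : 0 < |s| := abs_pos.mpr hs0
  -- minimal n with n * |s| > 1/4
  have hex : ∃ n : ℕ, 1/4 < n * |s| := by
    obtain ⟨n, hn⟩ := Archimedean.arch (1/4 : ℝ) hspos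
    rw [nsmul_eq_mul] at hn
    exact ⟨n + 1, by push_cast; nlinarith [hn]⟩
  classical
  let n := Nat.find hex
  have hn : 1/4 < (n : ℝ) * |s| := Nat.find_spec hex
  have hn0 : n ≠ 0 := by
    intro h0
    rw [h0] at hn; norm_num at hn
  have hprev : ¬ (1/4 : ℝ) < ((n - 1 : ℕ) : ℝ) * |s| := Nat.find_min hex (Nat.sub_lt (Nat.pos_of_ne_zero hn0) one_pos)
  push_neg at hprev
  have hcast : ((n - 1 : ℕ) : ℝ) = (n : ℝ) - 1 := by
    rw [Nat.cast_sub (Nat.one_le_iff_ne_zero.mpr hn0)]; norm_num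
  rw [hcast] at hprev
  have hle : (n : ℝ) * |s| ≤ 1/2 := by nlinarith [hprev, hs4]
  have habs : |(n : ℝ) * s| = (n : ℝ) * |s| := by
    rw [abs_mul, Nat.abs_cast]
  have hnorm : ‖((((n : ℝ) * s : ℝ)) : AddCircle (1 : ℝ))‖ = (n : ℝ) * |s| := by
    rw [← habs]
    rw [AddCircle.norm_coe_eq_abs_iff (1 : ℝ) one_ne_zero]
    rw [habs]
    simpa using hle
  have hsmul : (n • (t : AddCircle (1 : ℝ))) = ((((n : ℝ) * s : ℝ)) : AddCircle (1 : ℝ)) := by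
    rw [← hcoe, ← AddCircle.coe_nsmul]
    congr 1
    simp [nsmul_eq_mul]
  have := h n
  rw [hsmul, hnorm] at this
  linarith

/-- If each topological abelian group `G i` has only trivial continuous characters, then
the product `∀ i, G i` (with the product topology) has only trivial continuous characters. -/
theorem pi_minAP (I : Type*) (G : I → Type*) [∀ i, AddCommGroup (G i)]
    [∀ i, TopologicalSpace (G i)] [∀ i, IsTopologicalAddGroup (G i)]
    (h : ∀ i, ∀ χ : G i →+ AddCircle (1 : ℝ), Continuous χ → χ = 0) :
    ∀ χ : (∀ i, G i) →+ AddCircle (1 : ℝ), Continuous χ → χ = 0 := by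
  classical
  intro χ hχ
  -- preimage of the ball of radius 1/4 is a neighborhood of 0
  have hball : χ ⁻¹' (Metric.ball 0 (1/4)) ∈ 𝓝 (0 : ∀ i, G i) := by
    apply hχ.continuousAt.preimage_mem_nhds
    simpa [map_zero] using Metric.ball_mem_nhds (0 : AddCircle (1 : ℝ)) (by norm_num)
  rw [nhds_pi, Filter.mem_pi] at hball
  obtain ⟨F, hFfin, t, ht, hsub⟩ := hball
  -- every element vanishing on F maps to 0
  have hH : ∀ y : ∀ i, G i, (∀ i ∈ F, y i = 0) → χ y = 0 := by
    intro y hy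
    apply addCircle_no_small
    intro n
    have hmem : (n • y) ∈ F.pi t := by
      intro i hi
      have : (n • y) i = 0 := by simp [hy i hi]
      rw [this]
      exact mem_of_mem_nhds (ht i)
    have := hsub hmem
    simpa [map_nsmul, Metric.mem_ball, dist_eq_norm] using this
  ext x
  simp only [AddMonoidHom.zero_apply]
  set Fs := hFfin.toFinset with hFs
  set xF : ∀ i, G i := ∑ i ∈ Fs, Pi.single i (x i) with hxF
  have hxFval : ∀ i ∈ F, xF i = x i := by
    intro i hi
    rw [hxF, Finset.sum_apply]
    rw [Finset.sum_eq_single i]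
    · simp
    · intro b _ hb; simp [Pi.single_apply, hb]
    · intro hni; exact absurd (hFfin.mem_toFinset.mpr hi) hni
  have hdecomp : x = xF + (x - xF) := by abel
  rw [hdecomp, map_add]
  have h2 : χ (x - xF) = 0 := by
    apply hH
    intro i hi
    simp [hxFval i hi]
  rw [h2, add_zero, hxF, map_sum]
  apply Finset.sum_eq_zero
  intro i _
  have hcont : Continuous (χ.comp (AddMonoidHom.single G i)) := by
    exact hχ.comp (continuous_single i)
  have := h i (χ.comp (AddMonoidHom.single G i)) hcont
  have := DFunLike.congr_fun this (x i)
  simpa using this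
end

section
/- Let G be a connected topological abelian group whose free rank r₀(G) (the maximal cardinality of a ℤ-independent subset) is strictly less than the cardinality of the continuum. Then every continuous homomorphism χ : G → ℝ/ℤ is trivial. -/
open Cardinal Set

private lemma addCircle_eq_coe_of_norm {t : ℝ} (y : AddCircle (1:ℝ)) (h : ‖y‖ = t) :
    y = ((t : ℝ) : AddCircle (1:ℝ)) ∨ y = ((-t : ℝ) : AddCircle (1:ℝ)) := by
  obtain ⟨u, rfl⟩ := QuotientAddGroup.mk_surjective y
  have hmk : (QuotientAddGroup.mk u : AddCircle (1:ℝ)) = ((u : ℝ) : AddCircle (1:ℝ)) := rfl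
  rw [hmk] at h ⊢
  rw [AddCircle.norm_eq] at h
  simp only [inv_one, one_mul, mul_one] at h
  have ht : 0 ≤ t := h ▸ abs_nonneg _
  have key : ∀ s : ℝ, u - s = (round u : ℝ) → ((u:ℝ) : AddCircle (1:ℝ)) = ((s:ℝ) : AddCircle (1:ℝ)) := by
    intro s hs
    have h0 : ((u - s : ℝ) : AddCircle (1:ℝ)) = 0 :=
      (AddCircle.coe_eq_zero_iff (1:ℝ)).mpr ⟨round u, by simp [hs]⟩
    rw [AddCircle.coe_sub, sub_eq_zero] at h0
    exact h0
  rcases (abs_eq ht).mp h with h' | h'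
  · exact Or.inl (key t (by linarith))
  · exact Or.inr (key (-t) (by linarith))

private lemma surjective_of_ne_zero {G : Type*} [AddCommGroup G] [TopologicalSpace G]
    [IsTopologicalAddGroup G] [ConnectedSpace G]
    (χ : G →+ AddCircle (1 : ℝ)) (hχ : Continuous χ) (hne : χ ≠ 0) :
    Function.Surjective χ := by
  obtain ⟨g, hg⟩ : ∃ g, χ g ≠ 0 := by
    by_contra h
    push_neg at h
    exact hne (AddMonoidHom.ext h)
  set r : ℝ := ‖χ g‖ with hr
  have hrpos : 0 < r := by simpa [hr] using hg
  -- every t ∈ [0, r] has coe t in the range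
  have hIcc : ∀ t ∈ Icc (0:ℝ) r, ((t : ℝ) : AddCircle (1:ℝ)) ∈ χ.range := by
    intro t htmem
    have hconn : IsPreconnected (range fun x => ‖χ x‖) :=
      (isConnected_range (hχ.norm)).isPreconnected
    have h0 : (0:ℝ) ∈ range fun x => ‖χ x‖ := ⟨0, by simp⟩
    have hrmem : r ∈ range fun x => ‖χ x‖ := ⟨g, rfl⟩
    obtain ⟨x, hx⟩ := hconn.Icc_subset h0 hrmem htmem
    rcases addCircle_eq_coe_of_norm (χ x) hx with h | h
    · exact ⟨x, h⟩
    · refine ⟨-x, ?_⟩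
      rw [map_neg, h, AddCircle.coe_neg, neg_neg]
  -- now surjectivity
  intro z
  obtain ⟨u, rfl⟩ := QuotientAddGroup.mk_surjective z
  have hmk : (QuotientAddGroup.mk u : AddCircle (1:ℝ)) = ((u : ℝ) : AddCircle (1:ℝ)) := rfl
  rw [hmk]
  obtain ⟨n, hn1, hn2⟩ : ∃ n : ℕ, 0 < n ∧ |u| / n ≤ r := by
    refine ⟨max 1 ⌈|u| / r⌉₊, lt_of_lt_of_le one_pos (le_max_left _ _), ?_⟩
    rw [div_le_iff₀ (by positivity)]
    calc |u| = r * (|u| / r) := by field_simp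
    _ ≤ r * ⌈|u| / r⌉₊ := by
        exact mul_le_mul_of_nonneg_left (Nat.le_ceil _) hrpos.le
    _ ≤ r * (max 1 ⌈|u| / r⌉₊ : ℕ) := by
        refine mul_le_mul_of_nonneg_left ?_ hrpos.le
        exact_mod_cast Nat.cast_le.mpr (le_max_right _ _)
  set t : ℝ := u / n with htdef
  have hmem : ((|t| : ℝ) : AddCircle (1:ℝ)) ∈ χ.range := by
    refine hIcc _ ⟨abs_nonneg _, ?_⟩
    rw [htdef, abs_div, abs_of_pos (by exact_mod_cast hn1 : (0:ℝ) < (n:ℝ))]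
    exact hn2
  have htmem : ((t : ℝ) : AddCircle (1:ℝ)) ∈ χ.range := by
    rcases abs_choice t with h | h
    · rwa [h] at hmem
    · have := neg_mem hmem
      rw [← AddCircle.coe_neg, h, neg_neg] at this
      exact this
  have : ((u : ℝ) : AddCircle (1:ℝ)) = n • ((t : ℝ) : AddCircle (1:ℝ)) := by
    rw [← AddCircle.coe_nsmul]
    congr 1
    rw [htdef, nsmul_eq_mul, mul_div_cancel₀]
    exact_mod_cast hn1.ne'
  rw [this]
  exact AddSubgroup.nsmul_mem _ htmem n

private lemma continuum_le_rank_addCircle :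
    Cardinal.continuum ≤ Module.rank ℤ (AddCircle (1:ℝ)) := by
  classical
  set b := Module.Basis.ofVectorSpace ℚ ℝ with hb
  set T := (b.repr 1).support with hT
  set ι' := {i : Module.Basis.ofVectorSpaceIndex ℚ ℝ // i ∉ T} with hι'
  have hli : LinearIndependent ℤ (fun i : ι' => ((b i.1 : ℝ) : AddCircle (1:ℝ))) := by
    rw [linearIndependent_iff']
    intro s g hsum j hj
    -- turn the sum into a statement about reals
    have hmap : ((∑ i ∈ s, g i • (b i.1) : ℝ) : AddCircle (1:ℝ)) = 0 := by
      have hcs : ((∑ i ∈ s, g i • (b i.1) : ℝ) : AddCircle (1:ℝ))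
          = ∑ i ∈ s, g i • ((b i.1 : ℝ) : AddCircle (1:ℝ)) := by
        simp only [← AddCircle.coe_zsmul]
        exact map_sum (QuotientAddGroup.mk' (AddSubgroup.zmultiples (1:ℝ))) _ s
      rw [hcs, hsum]
    obtain ⟨m, hm⟩ := (AddCircle.coe_eq_zero_iff (1:ℝ)).mp hmap
    have hm' : (∑ i ∈ s, g i • (b i.1) : ℝ) = m • (1:ℝ) := hm.symm
    have hrepr := congrArg (fun x => b.repr x j.1) hm'
    simp only [map_zsmul, map_sum] at hrepr
    have hL : (∑ i ∈ s, g i • b.repr (b i.1)) j.1 = g j := by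
      rw [Finsupp.finset_sum_apply]
      simp only [Module.Basis.repr_self, Finsupp.smul_apply, Finsupp.single_apply]
      rw [Finset.sum_eq_single j]
      · simp
      · intro i hi hij
        have : ¬ (i.1 = j.1) := fun h => hij (Subtype.ext h)
        simp [this]
      · intro h; exact absurd hj h
    have hR : (m • b.repr 1) j.1 = 0 := by
      have : b.repr 1 j.1 = 0 := Finsupp.notMem_support_iff.mp j.2
      simp [Finsupp.smul_apply, this]
    rw [hL] at hrepr
    rw [hR] at hrepr  -- careful ordering
    exact_mod_cast hrepr
  have hcard : Cardinal.continuum ≤ #ι' := by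
    have h1 : #(Module.Basis.ofVectorSpaceIndex ℚ ℝ) = Cardinal.continuum := by
      rw [b.mk_eq_rank'', Real.rank_rat_real]
    have h2 := Cardinal.mk_sum_compl ({i : Module.Basis.ofVectorSpaceIndex ℚ ℝ | i ∈ T})
    have h3 : #({i : Module.Basis.ofVectorSpaceIndex ℚ ℝ | i ∈ T}) < Cardinal.continuum := by
      calc #({i : Module.Basis.ofVectorSpaceIndex ℚ ℝ | i ∈ T}) = (T.card : Cardinal) :=
            Cardinal.mk_coe_finset
      _ < Cardinal.aleph0 := Cardinal.nat_lt_aleph0 _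
      _ ≤ Cardinal.continuum := Cardinal.aleph0_le_continuum
    by_contra hlt
    push_neg at hlt
    have : #({i : Module.Basis.ofVectorSpaceIndex ℚ ℝ | i ∈ T}ᶜ : Set _) < Cardinal.continuum := by
      refine lt_of_le_of_lt ?_ hlt
      apply le_of_eq
      congr 1
    have hsum := Cardinal.add_lt_of_lt Cardinal.aleph0_le_continuum h3 this
    rw [h2, h1] at hsum
    exact lt_irrefl _ hsum
  calc Cardinal.continuum ≤ #ι' := hcard
  _ ≤ Module.rank ℤ (AddCircle (1:ℝ)) := hli.cardinal_le_rank

/-- A connected topological abelian group whose free rank (the maximal cardinality of a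
`ℤ`-independent subset, i.e. `Module.rank ℤ G`) is strictly less than the continuum has
only trivial continuous characters. -/
theorem minAP_of_connected_small_rank (G : Type*) [AddCommGroup G] [TopologicalSpace G]
    [IsTopologicalAddGroup G] [ConnectedSpace G]
    (hrank : Module.rank ℤ G < Cardinal.continuum)
    (χ : G →+ AddCircle (1 : ℝ)) (hχ : Continuous χ) : χ = 0 := by
  by_contra hne
  have hsurj : Function.Surjective χ := surjective_of_ne_zero χ hχ hne
  have hle := LinearMap.lift_rank_le_of_surjective χ.toIntLinearMap hsurj
  have h2 : Cardinal.continuum ≤ Module.rank ℤ (AddCircle (1:ℝ)) := continuum_le_rank_addCircle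
  refine absurd hrank (not_lt.mpr ?_)
  have h3 := (Cardinal.lift_le.mpr h2).trans hle
  simpa using h3
end
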